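/- Let V be a p-dimensional vector space over an algebraically closed field of characteristic 0, and let G ⊆ GL(V) be a non-abelian finite p-group. Then G has no nonzero semi-invariant homogeneous polynomial of degree d with 1 ≤ d < p; equivalently, Sym^d V^∨ contains no one-dimensional G-subrepresentation for 1 ≤ d < p. -/

import Mathlib

/-- From an element of p-power order, extract a power of order exactly `p`. -/
lemma aux_pow_prime {H : Type*} [Group H] (p : ℕ) (hp : p.Prime) (x : H) (hx1 : x ≠ 1) :
    ∀ n : ℕ, x ^ p ^ n = 1 → ∃ m : ℕ, x ^ p ^ m ≠ 1 ∧ (x ^ p ^ m) ^ p = 1 := by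
  intro n
  induction n with
  | zero => intro h; simp at h; exact absurd h hx1
  | succ n ih =>
    intro h
    by_cases h' : x ^ p ^ n = 1
    · exact ih h'
    · exact ⟨n, h', by rw [← pow_mul, ← pow_succ]; exact h⟩

/-- A nontrivial normal subgroup of a finite p-group meets the center nontrivially. -/
lemma aux_center {H : Type*} [Group H] [Finite H] {p : ℕ} (hp : p.Prime)
    (hH : IsPGroup p H) (N : Subgroup H) [N.Normal] (x : H) (hxN : x ∈ N) (hx1 : x ≠ 1) :
    ∃ z : H, z ∈ N ∧ z ∈ Subgroup.center H ∧ z ≠ 1 := by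
  haveI : Fact p.Prime := ⟨hp⟩
  haveI : Nontrivial N := Subgroup.nontrivial_iff_ne_bot N |>.mpr (by
    intro hbot
    rw [hbot, Subgroup.mem_bot] at hxN
    exact hx1 hxN)
  have hNp : IsPGroup p N := hH.to_subgroup N
  obtain ⟨n, hn, hcard⟩ := (IsPGroup.nontrivial_iff_card hNp).mp inferInstance
  have hdvd : p ∣ Nat.card N := hcard ▸ dvd_pow_self p hn.ne'
  have hCA : IsPGroup p (ConjAct H) := hH.of_equiv ConjAct.toConjAct
  have h1fix : (1 : N) ∈ MulAction.fixedPoints (ConjAct H) N := by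
    intro g
    apply Subtype.ext
    rw [ConjAct.Subgroup.val_conj_smul]
    simp
  obtain ⟨b, hbfix, hb1⟩ := hCA.exists_fixed_point_of_prime_dvd_card_of_fixed_point N hdvd h1fix
  refine ⟨(b : H), b.2, Subgroup.mem_center_iff.mpr fun g => ?_, fun h => hb1 (Subtype.ext (by simpa using h.symm))⟩
  have := hbfix (ConjAct.toConjAct g)
  have h2 : g * (b : H) * g⁻¹ = (b : H) := by
    have h3 : ((ConjAct.toConjAct g • b : N) : H) = (b : H) := congrArg Subtype.val this
    rw [ConjAct.Subgroup.val_conj_smul, ConjAct.smul_def, ConjAct.ofConjAct_toConjAct] at h3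
    exact h3
  calc g * (b : H) = (g * b * g⁻¹) * g := by group
  _ = (b : H) * g := by rw [h2]

open Polynomial in
/-- An endomorphism of finite order `p` (prime, char 0, alg closed) is diagonalizable. -/
lemma aux_diag {k : Type*} [Field k] [IsAlgClosed k] [CharZero k]
    {W : Type*} [AddCommGroup W] [Module k W] [FiniteDimensional k W]
    (p : ℕ) (hp : p.Prime) (f : Module.End k W) (hf : f ^ p = 1) :
    ⨆ μ : k, f.eigenspace μ = ⊤ := by
  have hsep : ((X : k[X]) ^ p - 1).Separable :=
    Polynomial.X_pow_sub_one_separable_iff.mpr (by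
      exact_mod_cast fun h => hp.ne_zero (by exact_mod_cast h))
  have hsq : Squarefree ((X : k[X]) ^ p - 1) := hsep.squarefree
  have hss : f.IsSemisimple := Module.End.isSemisimple_of_squarefree_aeval_eq_zero hsq (by
    rw [map_sub, map_pow, Polynomial.aeval_X, map_one, hf, sub_self])
  have h := Module.End.iSup_maxGenEigenspace_eq_top f
  rw [← h]
  congr 1
  ext μ
  rw [hss.isFinitelySemisimple.maxGenEigenspace_eq_eigenspace]

open MvPolynomial in
/-- Scaling variables of a homogeneous polynomial. -/
lemma aux_homog {k : Type*} [CommRing k] {p : ℕ} {d : ℕ} (f : MvPolynomial (Fin p) k)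
    (hf : f.IsHomogeneous d) (ζ : k) :
    aeval (fun i => ζ • X i : Fin p → MvPolynomial (Fin p) k) f = ζ ^ d • f := by
  conv_lhs => rw [f.as_sum]
  rw [map_sum]
  conv_rhs => rw [f.as_sum, Finset.smul_sum]
  refine Finset.sum_congr rfl fun v hv => ?_
  have hdeg : (v.sum fun _ e => e) = d := by
    have := hf (mem_support_iff.mp hv)
    simpa [Finsupp.weight, Finsupp.linearCombination, Finsupp.sum] using this
  rw [aeval_monomial, monomial_eq]
  have : (v.prod fun i e => ((fun i => ζ • X i : Fin p → MvPolynomial (Fin p) k) i) ^ e)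
      = C (ζ ^ d) * v.prod fun i e => (X i : MvPolynomial (Fin p) k) ^ e := by
    rw [Finsupp.prod, Finsupp.prod]
    have : ∀ i ∈ v.support, (ζ • (X i : MvPolynomial (Fin p) k)) ^ (v i)
        = C (ζ ^ (v i)) * (X i) ^ (v i) := by
      intro i _
      rw [smul_eq_C_mul, mul_pow, ← C_pow]
    rw [Finset.prod_congr rfl this, Finset.prod_mul_distrib]
    congr 1
    have hdeg' : ∑ x ∈ v.support, v x = d := hdeg
    rw [← map_prod, Finset.prod_pow_eq_pow_sum, hdeg']
  rw [this, smul_eq_C_mul, algebraMap_eq]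
  ring

open MvPolynomial in
lemma aux_comp {k : Type*} [CommRing k] {p : ℕ} (g h : Matrix (Fin p) (Fin p) k)
    (q : MvPolynomial (Fin p) k) :
    aeval (fun i => ∑ j, h i j • X j : Fin p → MvPolynomial (Fin p) k)
      (aeval (fun i => ∑ j, g i j • X j : Fin p → MvPolynomial (Fin p) k) q)
    = aeval (fun i => ∑ j, (g * h) i j • X j : Fin p → MvPolynomial (Fin p) k) q := by
  rw [← AlgHom.comp_apply, comp_aeval]
  congr 1
  ext i : 1
  rw [aeval_X, aeval_X, map_sum]
  simp only [map_smul, aeval_X, Finset.smul_sum, smul_smul]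
  rw [Finset.sum_comm]
  refine Finset.sum_congr rfl fun l _ => ?_
  rw [← Finset.sum_smul, Matrix.mul_apply]

section
variable {k : Type*} [Field k] {W : Type*} [AddCommGroup W] [Module k W]

/-- Restrict a unit of the endomorphism algebra to an invariant submodule. -/
def restrictUnit (E : Submodule k W) (u : (Module.End k W)ˣ)
    (h₁ : ∀ x ∈ E, u.val x ∈ E) (h₂ : ∀ x ∈ E, u.inv x ∈ E) : (Module.End k ↥E)ˣ where
  val := u.val.restrict h₁
  inv := u.inv.restrict h₂
  val_inv := by
    apply LinearMap.ext
    rintro ⟨x, hx⟩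
    apply Subtype.ext
    simp only [Module.End.mul_apply, LinearMap.restrict_coe_apply, Module.End.one_apply]
    exact LinearMap.congr_fun u.val_inv x
  inv_val := by
    apply LinearMap.ext
    rintro ⟨x, hx⟩
    apply Subtype.ext
    simp only [Module.End.mul_apply, LinearMap.restrict_coe_apply, Module.End.one_apply]
    exact LinearMap.congr_fun u.inv_val x

@[simp] lemma restrictUnit_coe_apply (E : Submodule k W) (u : (Module.End k W)ˣ)
    (h₁ : ∀ x ∈ E, u.val x ∈ E) (h₂ : ∀ x ∈ E, u.inv x ∈ E) (x : ↥E) :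
    (((restrictUnit E u h₁ h₂).val x : ↥E) : W) = u.val x :=
  rfl

end

/-- The determinant contradiction: in dimension `< p`, a p-group in `GL(W)` has no
nontrivial scalar element in its commutator subgroup. -/
lemma aux_det {k : Type*} [Field k] {W : Type*} [AddCommGroup W] [Module k W]
    [FiniteDimensional k W] (p : ℕ) (hp : p.Prime) (hlt : Module.finrank k W < p)
    (G : Subgroup (Module.End k W)ˣ) (w : ↥G) (hwN : w ∈ commutator ↥G) (hw1 : w ≠ 1)
    (μ : k) (hμ1 : μ ≠ 1) (hμp : μ ^ p = 1)
    (hsc : ((w : (Module.End k W)ˣ) : Module.End k W) = μ • 1) : False := by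
  haveI : Fact p.Prime := ⟨hp⟩
  have hf1 : ((w : (Module.End k W)ˣ) : Module.End k W) ≠ 1 := by
    intro h
    exact hw1 (Subtype.ext (Units.ext h))
  haveI : Nontrivial W := by
    by_contra hW
    rw [not_nontrivial_iff_subsingleton] at hW
    exact hf1 (LinearMap.ext fun x => Subsingleton.elim _ _)
  have hn1 : 0 < Module.finrank k W := Module.finrank_pos
  let δ : ↥G →* kˣ := (Units.map (LinearMap.det : (W →ₗ[k] W) →* k)).comp G.subtype
  have hker : δ w = 1 := Abelianization.commutator_subset_ker δ hwN
  have hdet : LinearMap.det ((w : (Module.End k W)ˣ) : Module.End k W) = 1 :=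
    congrArg Units.val hker
  rw [hsc, LinearMap.det_smul, map_one, mul_one] at hdet
  have horder : orderOf μ = p := orderOf_eq_prime hμp hμ1
  have hdvd : p ∣ Module.finrank k W := horder ▸ orderOf_dvd_of_pow_eq_one hdet
  exact absurd (Nat.le_of_dvd hn1 hdvd) (by omega)

open scoped commutatorElement in
/-- Main induction: a finite p-group inside `GL(W)` with `dim W ≤ p` is either abelian or
contains a nontrivial scalar element of its commutator subgroup. -/
lemma lemS {k : Type u} [Field k] [IsAlgClosed k] [CharZero k] (p : ℕ) (hp : p.Prime) :
    ∀ n : ℕ, n ≤ p → ∀ (W : Type v) (_ : AddCommGroup W), ∀ (_ : Module k W)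
    (_ : FiniteDimensional k W),
    Module.finrank k W = n →
    ∀ (G : Subgroup (Module.End k W)ˣ) (_ : Finite ↥G), IsPGroup p ↥G →
    (∀ a b : ↥G, a * b = b * a) ∨
    (∃ w : ↥G, w ∈ commutator ↥G ∧ w ≠ 1 ∧ ∃ μ : k, μ ≠ 1 ∧ μ ^ p = 1 ∧
      ((w : (Module.End k W)ˣ) : Module.End k W) = μ • 1) := by
  intro n
  induction n using Nat.strong_induction_on with
  | _ n IH =>
  intro hnp W _ _ _ hrank G _ hG
  by_cases hab : ∀ a b : ↥G, a * b = b * a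
  · exact Or.inl hab
  push_neg at hab
  obtain ⟨a, b, hab⟩ := hab
  have hc1 : (⁅a, b⁆ : ↥G) ≠ 1 := fun h => hab (commutatorElement_eq_one_iff_mul_comm.mp h)
  have hcmem : ⁅a, b⁆ ∈ commutator ↥G :=
    Subgroup.commutator_mem_commutator (Subgroup.mem_top a) (Subgroup.mem_top b)
  obtain ⟨z, hzN, hzC, hz1⟩ := aux_center hp hG (commutator ↥G) ⁅a, b⁆ hcmem hc1
  obtain ⟨kz, hkz⟩ := hG z
  obtain ⟨m, hw1, hwp⟩ := aux_pow_prime p hp z hz1 kz hkz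
  set w : ↥G := z ^ p ^ m with hwdef
  have hwN : w ∈ commutator ↥G := Subgroup.pow_mem _ hzN _
  have hwC : w ∈ Subgroup.center ↥G := Subgroup.pow_mem _ hzC _
  set f : Module.End k W := ((w : (Module.End k W)ˣ) : Module.End k W) with hfdef
  have hfp : f ^ p = 1 := by
    have h1 : (w ^ p : ↥G) = 1 := hwp
    have h2 : ((w ^ p : ↥G) : (Module.End k W)ˣ) = 1 := by rw [h1]; rfl
    calc f ^ p = (((w : (Module.End k W)ˣ) ^ p : (Module.End k W)ˣ) : Module.End k W) := by
          rw [Units.val_pow_eq_pow_val]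
    _ = 1 := by rw [← SubgroupClass.coe_pow, h2, Units.val_one]
  have hf1 : f ≠ 1 := fun h => hw1 (Subtype.ext (Units.ext h))
  -- every element of G commutes with f
  have hcomm : ∀ u : (Module.End k W)ˣ, u ∈ G → f * u.val = u.val * f := by
    intro u hu
    have := (Subgroup.mem_center_iff.mp hwC ⟨u, hu⟩).symm
    have h2 := congrArg (fun t : ↥G => ((t : (Module.End k W)ˣ) : Module.End k W)) this
    simpa using h2
  by_cases hsc : ∃ μ : k, f = μ • (1 : Module.End k W)
  · obtain ⟨μ, hμ⟩ := hsc
    haveI : Nontrivial W := by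
      by_contra hW
      rw [not_nontrivial_iff_subsingleton] at hW
      exact hf1 (LinearMap.ext fun x => Subsingleton.elim _ _)
    have hμ1 : μ ≠ 1 := by rintro rfl; exact hf1 (by rw [hμ, one_smul])
    have hμp : μ ^ p = 1 := by
      have h3 : (μ ^ p) • (1 : Module.End k W) = 1 := by
        have : (μ ^ p) • (1 : Module.End k W) = (μ • 1) ^ p := by rw [smul_pow, one_pow]
        rw [this, ← hμ, hfp]
      obtain ⟨v, hv⟩ := exists_ne (0 : W)
      have h4 := LinearMap.congr_fun h3 v
      simp only [LinearMap.smul_apply, Module.End.one_apply] at h4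
      have h5 : (μ ^ p - 1) • v = 0 := by rw [sub_smul, h4, one_smul, sub_self]
      rcases smul_eq_zero.mp h5 with h | h
      · exact sub_eq_zero.mp h
      · exact absurd h hv
    exact Or.inr ⟨w, hwN, hw1, μ, hμ1, hμp, hμ⟩
  · exfalso
    have hsup := aux_diag p hp f hfp
    have hEtop : ∀ μ : k, f.eigenspace μ ≠ ⊤ := by
      intro μ hE
      refine hsc ⟨μ, LinearMap.ext fun x => ?_⟩
      have hx : x ∈ f.eigenspace μ := hE ▸ Submodule.mem_top
      simpa [LinearMap.smul_apply, Module.End.one_apply] using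
        Module.End.mem_eigenspace_iff.mp hx
    have hdim : ∀ μ : k, Module.finrank k ↥(f.eigenspace μ) < n := by
      intro μ
      rw [← hrank]
      exact Submodule.finrank_lt (hEtop μ)
    -- key commuting on each eigenspace
    have key : ∀ (μ : k) (x : W), x ∈ f.eigenspace μ →
        ((((a * b) : ↥G) : (Module.End k W)ˣ) : Module.End k W) x
          = ((((b * a) : ↥G) : (Module.End k W)ˣ) : Module.End k W) x := by
      intro μ
      set E := f.eigenspace μ with hEdef
      have hinv : ∀ u : (Module.End k W)ˣ, u ∈ G → ∀ x ∈ E, u.val x ∈ E := by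
        intro u hu x hx
        rw [hEdef, Module.End.mem_eigenspace_iff] at hx ⊢
        have h6 := LinearMap.congr_fun (hcomm u hu) x
        simp only [Module.End.mul_apply] at h6
        rw [h6, hx, map_smul]
      let r : ↥G →* (Module.End k ↥E)ˣ :=
        { toFun := fun g => restrictUnit E (g : (Module.End k W)ˣ)
            (hinv _ g.2) (hinv _ (G.inv_mem g.2))
          map_one' := by
            apply Units.ext; apply LinearMap.ext; rintro ⟨x, hx⟩; apply Subtype.ext
            simp [restrictUnit]
          map_mul' := by
            intro g h
            apply Units.ext; apply LinearMap.ext; rintro ⟨x, hx⟩; apply Subtype.ext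
            simp [restrictUnit, LinearMap.restrict_coe_apply, Module.End.mul_apply] }
      haveI hfin : Finite ↥r.range := Set.Finite.to_subtype (Set.finite_range r)
      have hpr : IsPGroup p ↥r.range :=
        hG.of_surjective r.rangeRestrict r.rangeRestrict_surjective
      have hEp : Module.finrank k ↥E ≤ p := le_of_lt (lt_of_lt_of_le (hdim μ) hnp)
      rcases IH (Module.finrank k ↥E) (hrank ▸ Submodule.finrank_lt (hEtop μ)) hEp
          ↥E inferInstance inferInstance inferInstance rfl r.range hfin hpr with
        habel | ⟨w', hw'N, hw'1, μ', hμ'1, hμ'p, hsc'⟩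
      · -- restricted actions commute
        intro x hx
        have h7 := habel (r.rangeRestrict a) (r.rangeRestrict b)
        have h8 : r a * r b = r b * r a := by
          have := congrArg Subtype.val h7
          simpa using this
        have h9 := congrArg Units.val h8
        have h10 := LinearMap.congr_fun h9 ⟨x, hx⟩
        have h11 := congrArg Subtype.val h10
        simp only [Units.val_mul, Module.End.mul_apply] at h11
        -- h11 : restrict a (restrict b ⟨x,hx⟩) = restrict b (restrict a ⟨x,hx⟩) coerced
        simpa [r, restrictUnit, LinearMap.restrict_coe_apply, Units.val_mul,
          Module.End.mul_apply] using h11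
      · intro x hx
        exact (aux_det p hp (lt_of_lt_of_le (hdim μ) hnp) r.range w' hw'N hw'1
          μ' hμ'1 hμ'p hsc').elim
    -- conclude a b = b a
    have hcontra : ((((a * b) : ↥G) : (Module.End k W)ˣ) : Module.End k W)
        = ((((b * a) : ↥G) : (Module.End k W)ˣ) : Module.End k W) := by
      have hle : ⨆ μ : k, f.eigenspace μ ≤ LinearMap.ker
          (((((a * b) : ↥G) : (Module.End k W)ˣ) : Module.End k W)
            - ((((b * a) : ↥G) : (Module.End k W)ˣ) : Module.End k W)) := by
        refine iSup_le fun μ => fun x hx => ?_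
        rw [LinearMap.mem_ker, LinearMap.sub_apply, sub_eq_zero]
        exact key μ x hx
      rw [hsup, top_le_iff] at hle
      rw [LinearMap.ker_eq_top] at hle
      exact sub_eq_zero.mp hle
    exact hab (Subtype.ext (Units.ext hcontra))

open scoped MatrixGroups

open scoped MatrixGroups
open MvPolynomial

/-- Let `V` be a `p`-dimensional vector space over an algebraically closed field of
characteristic `0` and `G ⊆ GL(V)` a non-abelian finite `p`-group. Then `G` has no nonzero
homogeneous semi-invariant of degree `d` with `1 ≤ d < p`. -/
theorem stmt8 (p : ℕ) (hp : p.Prime) (k : Type*) [Field k] [IsAlgClosed k] [CharZero k]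
    (G : Subgroup (GL (Fin p) k)) [Finite G] (hG : IsPGroup p G)
    (hna : ¬ ∀ a b : G, a * b = b * a)
    (d : ℕ) (hd1 : 1 ≤ d) (hdp : d < p)
    (f : MvPolynomial (Fin p) k) (hf0 : f ≠ 0) (hf : f.IsHomogeneous d)
    (hsemi : ∀ g : GL (Fin p) k, g ∈ G → ∃ c : k,
      MvPolynomial.aeval
        (fun i => ∑ j, (g : Matrix (Fin p) (Fin p) k) i j • MvPolynomial.X j) f = c • f) :
    False := by
  haveI : Fact p.Prime := ⟨hp⟩
  classical
  -- the substitution associated to a matrix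
  set S : Matrix (Fin p) (Fin p) k → (Fin p → MvPolynomial (Fin p) k) :=
    fun g i => ∑ j, g i j • X j with hSdef
  -- uniqueness of the semi-invariant factor
  have huniq : ∀ c c' : k, c • f = c' • f → c = c' := by
    intro c c' h
    have h2 : (c - c') • f = 0 := by rw [sub_smul, h, sub_self]
    rcases smul_eq_zero.mp h2 with h3 | h3
    · exact sub_eq_zero.mp h3
    · exact absurd h3 hf0
  have hmat : ∀ g : ↥G, ((g : GL (Fin p) k) : Matrix (Fin p) (Fin p) k)
      * (((g⁻¹ : ↥G) : GL (Fin p) k) : Matrix (Fin p) (Fin p) k) = 1 := by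
    intro g
    rw [← Units.val_mul]
    norm_cast
    rw [mul_inv_cancel]
    rfl
  have hS1 : aeval (S 1) f = f := by
    have : S 1 = X := by
      funext i
      simp [hSdef, Matrix.one_apply, ite_smul]
    rw [this, aeval_X_left_apply]
  set cf : ↥G → k := fun g => Classical.choose (hsemi g.1 g.2) with hcfdef
  have hcf : ∀ g : ↥G, aeval (S ((g : GL (Fin p) k) : Matrix (Fin p) (Fin p) k)) f
      = cf g • f := fun g => Classical.choose_spec (hsemi g.1 g.2)
  have hcomp : ∀ g h : ↥G, aeval (S (((g * h : ↥G) : GL (Fin p) k) : Matrix (Fin p) (Fin p) k)) f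
      = (cf g * cf h) • f := by
    intro g h
    have h1 : (((g * h : ↥G) : GL (Fin p) k) : Matrix (Fin p) (Fin p) k)
        = ((g : GL (Fin p) k) : Matrix (Fin p) (Fin p) k)
          * ((h : GL (Fin p) k) : Matrix (Fin p) (Fin p) k) := by
      norm_cast
    rw [h1, ← aux_comp, hcf g, map_smul, hcf h, smul_smul]
  have hcmul : ∀ g h : ↥G, cf (g * h) = cf g * cf h := fun g h =>
    huniq _ _ (by rw [← hcf (g * h), hcomp])
  have hc1 : cf 1 = 1 := huniq _ _ (by
    rw [← hcf 1, one_smul]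
    have : (((1 : ↥G) : GL (Fin p) k) : Matrix (Fin p) (Fin p) k) = 1 := by norm_cast
    rw [this]
    exact hS1)
  have hcnz : ∀ g : ↥G, cf g ≠ 0 := by
    intro g hzero
    have h1 := hcomp g g⁻¹
    rw [mul_inv_cancel, hzero, zero_mul, zero_smul] at h1
    have h2 : (((1 : ↥G) : GL (Fin p) k) : Matrix (Fin p) (Fin p) k) = 1 := by norm_cast
    rw [h2, hS1] at h1
    exact hf0 h1
  -- the character
  let χ : ↥G →* kˣ :=
    { toFun := fun g => Units.mk0 (cf g) (hcnz g)
      map_one' := Units.ext hc1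
      map_mul' := fun g h => Units.ext (hcmul g h) }
  -- move to endomorphisms
  let Φe : GL (Fin p) k ≃* (Module.End k (Fin p → k))ˣ :=
    Units.mapEquiv (Matrix.toLinAlgEquiv (Pi.basisFun k (Fin p))).toMulEquiv
  let Φ : GL (Fin p) k →* (Module.End k (Fin p → k))ˣ := Φe.toMonoidHom
  have hΦinj : Function.Injective Φ := Φe.injective
  set G' : Subgroup (Module.End k (Fin p → k))ˣ := G.map Φ with hG'def
  let e : ↥G ≃* ↥G' := Subgroup.equivMapOfInjective G Φ hΦinj
  haveI hfinG' : Finite ↥G' := Finite.of_equiv ↥G e.toEquiv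
  have hGp' : IsPGroup p ↥G' := hG.of_equiv e
  have hrk : Module.finrank k (Fin p → k) = p := Module.finrank_fin_fun k
  rcases lemS p hp p le_rfl (Fin p → k) inferInstance inferInstance inferInstance hrk
      G' hfinG' hGp' with habel | ⟨w', hw'N, hw'1, μ, hμ1, hμp, hsc⟩
  · exact hna fun a b => e.injective (by rw [map_mul, map_mul, habel (e a) (e b)])
  · -- pull back the scalar element
    set g : ↥G := e.symm w' with hgdef
    have hΦg : Φ (g : GL (Fin p) k) = (w' : (Module.End k (Fin p → k))ˣ) := by
      have : e g = w' := e.apply_symm_apply w'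
      rw [← this]
      exact (Subgroup.coe_equivMapOfInjective_apply G Φ hΦinj g).symm
    have hmatg : ((g : GL (Fin p) k) : Matrix (Fin p) (Fin p) k)
        = μ • (1 : Matrix (Fin p) (Fin p) k) := by
      apply (Matrix.toLinAlgEquiv (Pi.basisFun k (Fin p))).injective
      have h3 : ((Φ (g : GL (Fin p) k) : (Module.End k (Fin p → k))ˣ) : Module.End k (Fin p → k))
          = (Matrix.toLinAlgEquiv (Pi.basisFun k (Fin p)))
            ((g : GL (Fin p) k) : Matrix (Fin p) (Fin p) k) :=
        Units.coe_mapEquiv _ _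
      rw [← h3, hΦg, hsc, map_smul, map_one]
    -- the character is trivial on commutators
    have hχ1 : cf g = 1 := by
      have h4 : w' ∈ (χ.comp e.symm.toMonoidHom).ker :=
        Abelianization.commutator_subset_ker (χ.comp e.symm.toMonoidHom) hw'N
      have h5 := congrArg Units.val h4
      simpa [χ] using h5
    -- compute the action of the scalar matrix
    have hSg : S ((g : GL (Fin p) k) : Matrix (Fin p) (Fin p) k)
        = fun i => μ • X i := by
      funext i
      rw [hmatg]
      simp [hSdef, Matrix.one_apply, ite_smul, smul_smul]
    have h6 := hcf g
    rw [hSg, aux_homog f hf μ, hχ1, one_smul] at h6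
    have hμd : μ ^ d = 1 := huniq _ _ (by rw [h6, one_smul])
    have horder : orderOf μ = p := orderOf_eq_prime hμp hμ1
    have hdvd : p ∣ d := horder ▸ orderOf_dvd_of_pow_eq_one hμd
    exact absurd (Nat.le_of_dvd (by omega) hdvd) (by omega)
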